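/- Let F be a forest on n vertices with 3 dividing e(F) that contains two vertex-disjoint switching structures, the first a (non-generalized) switching structure and the second either a degree-2 generalized switching structure with n ≥ 7, or a degree-3 generalized switching structure with n ≥ 9. Let χ : E(K_n) → Z_3 be an edge-coloring containing an alternating 4-cycle C such that the complete graph on the vertices outside C is not monochromatic. Then there is a copy of F in K_n whose edge colors sum to 0 in Z_3. -/
import Mathlib


open Finset

/-- A zero-sum (over `ZMod 3`) copy of the graph `F` in the edge-colored complete graph
on `Fin N`. -/
def HasZeroSumCopy {V : Type} [Fintype V] [DecidableEq V] {N : ℕ}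
    (F : SimpleGraph V) [DecidableRel F.Adj] (χ : Sym2 (Fin N) → ZMod 3) : Prop :=
  ∃ f : V → Fin N, Function.Injective f ∧ ∑ e ∈ F.edgeFinset, χ (e.map f) = 0

/-- `(v₁, v₂, v₃, v₄)` is a (non-generalized) switching structure of `F`. -/
def IsSwitchingStructure {V : Type} [Fintype V] [DecidableEq V]
    (F : SimpleGraph V) [DecidableRel F.Adj] (v₁ v₂ v₃ v₄ : V) : Prop :=
  ([v₁, v₂, v₃, v₄] : List V).Nodup ∧
    ((F.Adj v₁ v₂ ∧ F.Adj v₂ v₃ ∧ F.Adj v₃ v₄ ∧ F.degree v₂ = 2 ∧ F.degree v₃ = 2) ∨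
      (F.Adj v₁ v₂ ∧ F.degree v₂ = 1 ∧ F.Adj v₄ v₃ ∧ F.degree v₃ = 1))

/-- `(l, u)` is a degree-2 generalized switching structure of `F`: `u` has degree 2
and is either adjacent to the leaf `l`, or adjacent to the parent of the leaf `l`. -/
def IsGenSwitch2 {V : Type} [Fintype V] [DecidableEq V]
    (F : SimpleGraph V) [DecidableRel F.Adj] (l u : V) : Prop :=
  l ≠ u ∧ F.degree u = 2 ∧ F.degree l = 1 ∧
    (F.Adj u l ∨ ∃ p : V, F.Adj u p ∧ F.Adj p l)

/-- `(l, u, v, w)` is a degree-3 generalized switching structure of `F`: `u` has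
degree 3 with neighbors `v`, `w`, and either the leaf `l`, or a third neighbor which
is the parent of the leaf `l`. -/
def IsGenSwitch3 {V : Type} [Fintype V] [DecidableEq V]
    (F : SimpleGraph V) [DecidableRel F.Adj] (l u v w : V) : Prop :=
  ([l, u, v, w] : List V).Nodup ∧ F.degree u = 3 ∧ F.degree l = 1 ∧
    F.Adj u v ∧ F.Adj u w ∧
    (F.Adj u l ∨ ∃ p : V, p ≠ v ∧ p ≠ w ∧ F.Adj u p ∧ F.Adj p l)

/-- The 4-cycle `uvwz` is alternating for the coloring `χ`. -/
def IsAltC4 {N : ℕ} (χ : Sym2 (Fin N) → ZMod 3) (u v w z : Fin N) : Prop :=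
  ([u, v, w, z] : List (Fin N)).Nodup ∧
    χ s(u, v) + χ s(w, z) ≠ χ s(v, w) + χ s(z, u)

/-- The complete graph on the vertices outside `{a, b, c, d}` is monochromatic. -/
def MonoOutside {N : ℕ} (χ : Sym2 (Fin N) → ZMod 3) (a b c d : Fin N) : Prop :=
  ∃ m : ZMod 3, ∀ x y : Fin N,
    x ≠ a → x ≠ b → x ≠ c → x ≠ d → y ≠ a → y ≠ b → y ≠ c → y ≠ d → x ≠ y →
      χ s(x, y) = m

set_option linter.unusedSectionVars false

namespace ZSAux
variable {V : Type} [Fintype V] [DecidableEq V] {F : SimpleGraph V} [DecidableRel F.Adj]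

lemma nbrFinset_eq {u : V} {s : Finset V} (hsub : s ⊆ F.neighborFinset u)
    (hcard : F.degree u ≤ s.card) : F.neighborFinset u = s :=
  (Finset.eq_of_subset_of_card_le hsub (by rwa [F.card_neighborFinset_eq_degree u])).symm

lemma nbr1 {u a : V} (hdeg : F.degree u = 1) (h1 : F.Adj u a) :
    F.neighborFinset u = {a} :=
  nbrFinset_eq (by simp [h1]) (by simp [hdeg])

lemma nbr2 {u a b : V} (hdeg : F.degree u = 2) (ha : F.Adj u a) (hb : F.Adj u b)
    (hab : a ≠ b) : F.neighborFinset u = {a, b} :=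
  nbrFinset_eq (by simp [Finset.insert_subset_iff, ha, hb])
    (by rw [Finset.card_insert_of_notMem (by simp [hab]), Finset.card_singleton, hdeg])

lemma nbr3 {u a b c : V} (hdeg : F.degree u = 3) (ha : F.Adj u a) (hb : F.Adj u b)
    (hc : F.Adj u c) (hab : a ≠ b) (hac : a ≠ c) (hbc : b ≠ c) :
    F.neighborFinset u = {a, b, c} :=
  nbrFinset_eq (by simp [Finset.insert_subset_iff, ha, hb, hc])
    (by rw [Finset.card_insert_of_notMem (by simp [hab, hac]),
        Finset.card_insert_of_notMem (by simp [hbc]), Finset.card_singleton, hdeg])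

lemma adj1 {u a : V} (hdeg : F.degree u = 1) (ha : F.Adj u a) {z : V}
    (hz : F.Adj u z) : z = a := by
  have h := nbr1 hdeg ha
  have hzz := (F.mem_neighborFinset u z).2 hz
  rw [h] at hzz; simpa using hzz

lemma adj2 {u a b : V} (hdeg : F.degree u = 2) (ha : F.Adj u a) (hb : F.Adj u b)
    (hab : a ≠ b) {z : V} (hz : F.Adj u z) : z = a ∨ z = b := by
  have h := nbr2 hdeg ha hb hab
  have hzz := (F.mem_neighborFinset u z).2 hz
  rw [h] at hzz; simpa using hzz

lemma adj3 {u a b c : V} (hdeg : F.degree u = 3) (ha : F.Adj u a) (hb : F.Adj u b)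
    (hc : F.Adj u c) (hab : a ≠ b) (hac : a ≠ c) (hbc : b ≠ c) {z : V}
    (hz : F.Adj u z) : z = a ∨ z = b ∨ z = c := by
  have h := nbr3 hdeg ha hb hc hab hac hbc
  have hzz := (F.mem_neighborFinset u z).2 hz
  rw [h] at hzz; simpa using hzz

lemma other2 {u a : V} (hdeg : F.degree u = 2) (ha : F.Adj u a) :
    ∃ b, F.Adj u b ∧ b ≠ a := by
  have h1 : a ∈ F.neighborFinset u := (F.mem_neighborFinset u a).2 ha
  have hne : ((F.neighborFinset u).erase a).Nonempty := by
    rw [← Finset.card_pos, Finset.card_erase_of_mem h1,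
      F.card_neighborFinset_eq_degree u, hdeg]
    norm_num
  obtain ⟨b, hb⟩ := hne
  exact ⟨b, (F.mem_neighborFinset u b).1 (Finset.mem_of_mem_erase hb),
    Finset.ne_of_mem_erase hb⟩

lemma sum_swap_general {n : ℕ} (χ : Sym2 (Fin n) → ZMod 3) (f : V → Fin n) (x y : V)
    (E : Finset (Sym2 V)) (hsub : E ⊆ F.edgeFinset)
    (hall : ∀ e ∈ F.edgeFinset, (x ∈ e ∨ y ∈ e) → e ∈ E) :
    ∑ e ∈ F.edgeFinset, χ (e.map (f ∘ Equiv.swap x y)) =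
      ∑ e ∈ F.edgeFinset, χ (e.map f)
      + ((∑ e ∈ E, χ (e.map (f ∘ Equiv.swap x y))) - ∑ e ∈ E, χ (e.map f)) := by
  have key : ∑ e ∈ E, (χ (e.map (f ∘ Equiv.swap x y)) - χ (e.map f))
      = ∑ e ∈ F.edgeFinset, (χ (e.map (f ∘ Equiv.swap x y)) - χ (e.map f)) := by
    refine Finset.sum_subset hsub ?_
    intro e he hne
    have hmem : x ∉ e ∧ y ∉ e := by
      constructor <;> (intro hx; exact hne (hall e he (by tauto)))
    have hmapeq : e.map (f ∘ Equiv.swap x y) = e.map f := by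
      induction e using Sym2.ind with
      | _ p q =>
        have hpx : p ≠ x := fun h => hmem.1 (h ▸ Sym2.mem_mk_left p q)
        have hpy : p ≠ y := fun h => hmem.2 (h ▸ Sym2.mem_mk_left p q)
        have hqx : q ≠ x := fun h => hmem.1 (h ▸ Sym2.mem_mk_right p q)
        have hqy : q ≠ y := fun h => hmem.2 (h ▸ Sym2.mem_mk_right p q)
        simp [Sym2.map_pair_eq, Equiv.swap_apply_of_ne_of_ne, hpx, hpy, hqx, hqy]
    rw [hmapeq]; ring
  have expand : ∑ e ∈ F.edgeFinset, χ (e.map (f ∘ Equiv.swap x y)) =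
      ∑ e ∈ F.edgeFinset, (χ (e.map f) + (χ (e.map (f ∘ Equiv.swap x y)) - χ (e.map f))) :=
    Finset.sum_congr rfl (fun e _ => by ring)
  rw [expand, Finset.sum_add_distrib, ← key, Finset.sum_sub_distrib]


open SimpleGraph in
lemma vswap {n : ℕ} (χ : Sym2 (Fin n) → ZMod 3) {v₁ v₂ v₃ v₄ : V}
    (hS : IsSwitchingStructure F v₁ v₂ v₃ v₄) (f : V → Fin n) :
    ∑ e ∈ F.edgeFinset, χ (e.map (f ∘ Equiv.swap v₂ v₃)) =
      ∑ e ∈ F.edgeFinset, χ (e.map f)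
      + (χ s(f v₁, f v₃) + χ s(f v₂, f v₄) - χ s(f v₁, f v₂) - χ s(f v₃, f v₄)) := by
  obtain ⟨hnd, hcase⟩ := hS
  simp only [List.nodup_cons, List.mem_cons, List.not_mem_nil, or_false, not_or,
    List.nodup_nil, and_true] at hnd
  obtain ⟨⟨h12, h13, h14⟩, ⟨h23, h24⟩, h34, -⟩ := hnd
  have e1 : (Equiv.swap v₂ v₃) v₁ = v₁ := Equiv.swap_apply_of_ne_of_ne h12 h13
  have e4 : (Equiv.swap v₂ v₃) v₄ = v₄ :=
    Equiv.swap_apply_of_ne_of_ne (Ne.symm h24) (Ne.symm h34)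
  rcases hcase with ⟨a12, a23, a34, d2, d3⟩ | ⟨a12, d2, a43, d3⟩
  · set E : Finset (Sym2 V) := {s(v₁,v₂), s(v₂,v₃), s(v₃,v₄)} with hE
    have hsub : E ⊆ F.edgeFinset := by
      intro e he
      simp only [hE, Finset.mem_insert, Finset.mem_singleton] at he
      rcases he with rfl|rfl|rfl <;> simp [mem_edgeFinset, a12, a23, a34]
    have hall : ∀ e ∈ F.edgeFinset, (v₂ ∈ e ∨ v₃ ∈ e) → e ∈ E := by
      intro e he hm
      induction e using Sym2.ind with
      | _ p q =>
        rw [mem_edgeFinset, mem_edgeSet] at he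
        simp only [Sym2.mem_iff] at hm
        simp only [hE, Finset.mem_insert, Finset.mem_singleton, Sym2.eq_iff]
        rcases hm with (rfl|rfl)|(rfl|rfl)
        · rcases adj2 d2 a12.symm a23 h13 he with rfl|rfl
          · exact Or.inl (Or.inr ⟨rfl, rfl⟩)
          · exact Or.inr (Or.inl (Or.inl ⟨rfl, rfl⟩))
        · rcases adj2 d2 a12.symm a23 h13 he.symm with rfl|rfl
          · exact Or.inl (Or.inl ⟨rfl, rfl⟩)
          · exact Or.inr (Or.inl (Or.inr ⟨rfl, rfl⟩))
        · rcases adj2 d3 a23.symm a34 h24 he with rfl|rfl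
          · exact Or.inr (Or.inl (Or.inr ⟨rfl, rfl⟩))
          · exact Or.inr (Or.inr (Or.inl ⟨rfl, rfl⟩))
        · rcases adj2 d3 a23.symm a34 h24 he.symm with rfl|rfl
          · exact Or.inr (Or.inl (Or.inl ⟨rfl, rfl⟩))
          · exact Or.inr (Or.inr (Or.inr ⟨rfl, rfl⟩))
    rw [sum_swap_general χ f v₂ v₃ E hsub hall]
    congr 1
    have hm1 : s(v₁,v₂) ∉ ({s(v₂,v₃), s(v₃,v₄)} : Finset (Sym2 V)) := by
      simp [Sym2.eq_iff, h12, h13, h14, h23, h24, h34]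
    have hm2 : s(v₂,v₃) ∉ ({s(v₃,v₄)} : Finset (Sym2 V)) := by
      simp [Sym2.eq_iff, h12, h13, h14, h23, h24, h34]
    rw [hE]
    simp only [Finset.sum_insert hm1, Finset.sum_insert hm2, Finset.sum_singleton]
    simp only [Sym2.map_pair_eq, Function.comp_apply, e1, e4,
      Equiv.swap_apply_left, Equiv.swap_apply_right]
    rw [show s(f v₃, f v₂) = s(f v₂, f v₃) from Sym2.eq_swap]
    ring
  · set E : Finset (Sym2 V) := {s(v₁,v₂), s(v₃,v₄)} with hE
    have hsub : E ⊆ F.edgeFinset := by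
      intro e he
      simp only [hE, Finset.mem_insert, Finset.mem_singleton] at he
      rcases he with rfl|rfl <;> simp [mem_edgeFinset, a12, a43.symm]
    have hall : ∀ e ∈ F.edgeFinset, (v₂ ∈ e ∨ v₃ ∈ e) → e ∈ E := by
      intro e he hm
      induction e using Sym2.ind with
      | _ p q =>
        rw [mem_edgeFinset, mem_edgeSet] at he
        simp only [Sym2.mem_iff] at hm
        simp only [hE, Finset.mem_insert, Finset.mem_singleton, Sym2.eq_iff]
        rcases hm with (rfl|rfl)|(rfl|rfl)
        · rcases adj1 d2 a12.symm he with rfl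
          exact Or.inl (Or.inr ⟨rfl, rfl⟩)
        · rcases adj1 d2 a12.symm he.symm with rfl
          exact Or.inl (Or.inl ⟨rfl, rfl⟩)
        · rcases adj1 d3 a43.symm he with rfl
          exact Or.inr (Or.inl ⟨rfl, rfl⟩)
        · rcases adj1 d3 a43.symm he.symm with rfl
          exact Or.inr (Or.inr ⟨rfl, rfl⟩)
    rw [sum_swap_general χ f v₂ v₃ E hsub hall]
    congr 1
    have hm1 : s(v₁,v₂) ∉ ({s(v₃,v₄)} : Finset (Sym2 V)) := by
      simp [Sym2.eq_iff, h12, h13, h14, h23, h24, h34]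
    rw [hE]
    simp only [Finset.sum_insert hm1, Finset.sum_singleton]
    simp only [Sym2.map_pair_eq, Function.comp_apply, e1, e4,
      Equiv.swap_apply_left, Equiv.swap_apply_right]
    ring

open SimpleGraph in
lemma lu2 {n : ℕ} (χ : Sym2 (Fin n) → ZMod 3) {l u : V} (h : IsGenSwitch2 F l u) :
    ∃ t : V, F.Adj u t ∧ t ≠ l ∧
      ∀ f : V → Fin n,
        ∑ e ∈ F.edgeFinset, χ (e.map (f ∘ Equiv.swap l u)) =
          ∑ e ∈ F.edgeFinset, χ (e.map f) + (χ s(f l, f t) - χ s(f u, f t)) := by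
  obtain ⟨hlu, du, dl, hcase⟩ := h
  rcases hcase with hul | ⟨p, hup, hpl⟩
  · obtain ⟨t, hut, htl⟩ := other2 du hul
    have htu : t ≠ u := hut.ne'
    have hlt : l ≠ t := htl.symm
    have hul' : u ≠ l := hlu.symm
    refine ⟨t, hut, htl, ?_⟩
    intro f
    set E : Finset (Sym2 V) := {s(u,l), s(u,t)} with hE
    have hsub : E ⊆ F.edgeFinset := by
      intro e he
      simp only [hE, Finset.mem_insert, Finset.mem_singleton] at he
      rcases he with rfl|rfl <;> simp [mem_edgeFinset, hul, hut]
    have hall : ∀ e ∈ F.edgeFinset, (l ∈ e ∨ u ∈ e) → e ∈ E := by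
      intro e he hm
      induction e using Sym2.ind with
      | _ p q =>
        rw [mem_edgeFinset, mem_edgeSet] at he
        simp only [Sym2.mem_iff] at hm
        simp only [hE, Finset.mem_insert, Finset.mem_singleton, Sym2.eq_iff]
        rcases hm with (rfl|rfl)|(rfl|rfl)
        · rcases adj1 dl hul.symm he with rfl
          exact Or.inl (Or.inr ⟨rfl, rfl⟩)
        · rcases adj1 dl hul.symm he.symm with rfl
          exact Or.inl (Or.inl ⟨rfl, rfl⟩)
        · rcases adj2 du hul hut hlt he with rfl|rfl
          · exact Or.inl (Or.inl ⟨rfl, rfl⟩)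
          · exact Or.inr (Or.inl ⟨rfl, rfl⟩)
        · rcases adj2 du hul hut hlt he.symm with rfl|rfl
          · exact Or.inl (Or.inr ⟨rfl, rfl⟩)
          · exact Or.inr (Or.inr ⟨rfl, rfl⟩)
    rw [sum_swap_general χ f l u E hsub hall]
    congr 1
    have hm1 : s(u,l) ∉ ({s(u,t)} : Finset (Sym2 V)) := by
      simp [Sym2.eq_iff, hlt, hul', htu, hlu]
    rw [hE]
    simp only [Finset.sum_insert hm1, Finset.sum_singleton]
    simp only [Sym2.map_pair_eq, Function.comp_apply, Equiv.swap_apply_left,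
      Equiv.swap_apply_right, Equiv.swap_apply_of_ne_of_ne htl htu]
    rw [show s(f l, f u) = s(f u, f l) from Sym2.eq_swap]
    ring
  · have hpu : p ≠ u := hup.ne'
    have hup' : u ≠ p := hup.ne
    have hpl' : p ≠ l := hpl.ne
    have hlp : l ≠ p := hpl.ne'
    obtain ⟨t, hut, htp⟩ := other2 du hup
    have htu : t ≠ u := hut.ne'
    have hpt : p ≠ t := htp.symm
    have htl : t ≠ l := by
      rintro rfl
      exact hup' (adj1 dl hpl.symm hut.symm)
    have hlt : l ≠ t := htl.symm
    have hul' : u ≠ l := hlu.symm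
    refine ⟨t, hut, htl, ?_⟩
    intro f
    set E : Finset (Sym2 V) := {s(l,p), s(u,p), s(u,t)} with hE
    have hsub : E ⊆ F.edgeFinset := by
      intro e he
      simp only [hE, Finset.mem_insert, Finset.mem_singleton] at he
      rcases he with rfl|rfl|rfl <;> simp [mem_edgeFinset, hpl.symm, hup, hut]
    have hall : ∀ e ∈ F.edgeFinset, (l ∈ e ∨ u ∈ e) → e ∈ E := by
      intro e he hm
      induction e using Sym2.ind with
      | _ p' q =>
        rw [mem_edgeFinset, mem_edgeSet] at he
        simp only [Sym2.mem_iff] at hm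
        simp only [hE, Finset.mem_insert, Finset.mem_singleton, Sym2.eq_iff]
        rcases hm with (rfl|rfl)|(rfl|rfl)
        · rcases adj1 dl hpl.symm he with rfl
          exact Or.inl (Or.inl ⟨rfl, rfl⟩)
        · rcases adj1 dl hpl.symm he.symm with rfl
          exact Or.inl (Or.inr ⟨rfl, rfl⟩)
        · rcases adj2 du hup hut hpt he with rfl|rfl
          · exact Or.inr (Or.inl (Or.inl ⟨rfl, rfl⟩))
          · exact Or.inr (Or.inr (Or.inl ⟨rfl, rfl⟩))
        · rcases adj2 du hup hut hpt he.symm with rfl|rfl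
          · exact Or.inr (Or.inl (Or.inr ⟨rfl, rfl⟩))
          · exact Or.inr (Or.inr (Or.inr ⟨rfl, rfl⟩))
    rw [sum_swap_general χ f l u E hsub hall]
    congr 1
    have hm1 : s(l,p) ∉ ({s(u,p), s(u,t)} : Finset (Sym2 V)) := by
      simp [Sym2.eq_iff, hlu, hlt, hlp, hpu, hpt]
    have hm2 : s(u,p) ∉ ({s(u,t)} : Finset (Sym2 V)) := by
      simp [Sym2.eq_iff, hpt, hup', hpu]
    rw [hE]
    simp only [Finset.sum_insert hm1, Finset.sum_insert hm2, Finset.sum_singleton]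
    simp only [Sym2.map_pair_eq, Function.comp_apply, Equiv.swap_apply_left,
      Equiv.swap_apply_right, Equiv.swap_apply_of_ne_of_ne htl htu,
      Equiv.swap_apply_of_ne_of_ne hpl' hpu]
    ring

open SimpleGraph in
lemma lu3 {n : ℕ} (χ : Sym2 (Fin n) → ZMod 3) {l u v w : V} (h : IsGenSwitch3 F l u v w) :
    ∀ f : V → Fin n,
      ∑ e ∈ F.edgeFinset, χ (e.map (f ∘ Equiv.swap l u)) =
        ∑ e ∈ F.edgeFinset, χ (e.map f)
        + (χ s(f l, f v) + χ s(f l, f w) - χ s(f u, f v) - χ s(f u, f w)) := by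
  obtain ⟨hnd, du, dl, huv, huw, hcase⟩ := h
  simp only [List.nodup_cons, List.mem_cons, List.not_mem_nil, or_false, not_or,
    List.nodup_nil, and_true] at hnd
  obtain ⟨⟨hlu, hlv, hlw⟩, ⟨huv', huw'⟩, hvw, -⟩ := hnd
  have hul : u ≠ l := fun h => hlu h.symm
  have hvl : v ≠ l := fun h => hlv h.symm
  have hwl : w ≠ l := fun h => hlw h.symm
  have hvu : v ≠ u := fun h => huv' h.symm
  have hwu : w ≠ u := fun h => huw' h.symm
  have hwv : w ≠ v := fun h => hvw h.symm
  intro f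
  rcases hcase with hul' | ⟨p, hpv, hpw, hup, hpl⟩
  · set E : Finset (Sym2 V) := {s(u,l), s(u,v), s(u,w)} with hE
    have hsub : E ⊆ F.edgeFinset := by
      intro e he
      simp only [hE, Finset.mem_insert, Finset.mem_singleton] at he
      rcases he with rfl|rfl|rfl <;> simp [mem_edgeFinset, hul', huv, huw]
    have hall : ∀ e ∈ F.edgeFinset, (l ∈ e ∨ u ∈ e) → e ∈ E := by
      intro e he hm
      induction e using Sym2.ind with
      | _ p' q =>
        rw [mem_edgeFinset, mem_edgeSet] at he
        simp only [Sym2.mem_iff] at hm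
        simp only [hE, Finset.mem_insert, Finset.mem_singleton, Sym2.eq_iff]
        rcases hm with (rfl|rfl)|(rfl|rfl)
        · rcases adj1 dl hul'.symm he with rfl
          exact Or.inl (Or.inr ⟨rfl, rfl⟩)
        · rcases adj1 dl hul'.symm he.symm with rfl
          exact Or.inl (Or.inl ⟨rfl, rfl⟩)
        · rcases adj3 du hul' huv huw hlv hlw hvw he with rfl|rfl|rfl
          · exact Or.inl (Or.inl ⟨rfl, rfl⟩)
          · exact Or.inr (Or.inl (Or.inl ⟨rfl, rfl⟩))
          · exact Or.inr (Or.inr (Or.inl ⟨rfl, rfl⟩))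
        · rcases adj3 du hul' huv huw hlv hlw hvw he.symm with rfl|rfl|rfl
          · exact Or.inl (Or.inr ⟨rfl, rfl⟩)
          · exact Or.inr (Or.inl (Or.inr ⟨rfl, rfl⟩))
          · exact Or.inr (Or.inr (Or.inr ⟨rfl, rfl⟩))
    rw [sum_swap_general χ f l u E hsub hall]
    congr 1
    have hm1 : s(u,l) ∉ ({s(u,v), s(u,w)} : Finset (Sym2 V)) := by
      simp [Sym2.eq_iff, hul, hlu, hlv, hlw, hvu, hwu]
    have hm2 : s(u,v) ∉ ({s(u,w)} : Finset (Sym2 V)) := by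
      simp [Sym2.eq_iff, hvw, hwu, hvu]
    rw [hE]
    simp only [Finset.sum_insert hm1, Finset.sum_insert hm2, Finset.sum_singleton]
    simp only [Sym2.map_pair_eq, Function.comp_apply, Equiv.swap_apply_left,
      Equiv.swap_apply_right, Equiv.swap_apply_of_ne_of_ne hvl hvu,
      Equiv.swap_apply_of_ne_of_ne hwl hwu]
    rw [show s(f l, f u) = s(f u, f l) from Sym2.eq_swap]
    ring
  · have hpu : p ≠ u := hup.ne'
    have hup'' : u ≠ p := hup.ne
    have hpl' : p ≠ l := hpl.ne
    have hlp : l ≠ p := hpl.ne'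
    have hvp : v ≠ p := fun h => hpv h.symm
    have hwp : w ≠ p := fun h => hpw h.symm
    set E : Finset (Sym2 V) := {s(l,p), s(u,p), s(u,v), s(u,w)} with hE
    have hsub : E ⊆ F.edgeFinset := by
      intro e he
      simp only [hE, Finset.mem_insert, Finset.mem_singleton] at he
      rcases he with rfl|rfl|rfl|rfl <;> simp [mem_edgeFinset, hpl.symm, hup, huv, huw]
    have hall : ∀ e ∈ F.edgeFinset, (l ∈ e ∨ u ∈ e) → e ∈ E := by
      intro e he hm
      induction e using Sym2.ind with
      | _ p' q =>
        rw [mem_edgeFinset, mem_edgeSet] at he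
        simp only [Sym2.mem_iff] at hm
        simp only [hE, Finset.mem_insert, Finset.mem_singleton, Sym2.eq_iff]
        rcases hm with (rfl|rfl)|(rfl|rfl)
        · rcases adj1 dl hpl.symm he with rfl
          exact Or.inl (Or.inl ⟨rfl, rfl⟩)
        · rcases adj1 dl hpl.symm he.symm with rfl
          exact Or.inl (Or.inr ⟨rfl, rfl⟩)
        · rcases adj3 du hup huv huw hpv hpw hvw he with rfl|rfl|rfl
          · exact Or.inr (Or.inl (Or.inl ⟨rfl, rfl⟩))
          · exact Or.inr (Or.inr (Or.inl (Or.inl ⟨rfl, rfl⟩)))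
          · exact Or.inr (Or.inr (Or.inr (Or.inl ⟨rfl, rfl⟩)))
        · rcases adj3 du hup huv huw hpv hpw hvw he.symm with rfl|rfl|rfl
          · exact Or.inr (Or.inl (Or.inr ⟨rfl, rfl⟩))
          · exact Or.inr (Or.inr (Or.inl (Or.inr ⟨rfl, rfl⟩)))
          · exact Or.inr (Or.inr (Or.inr (Or.inr ⟨rfl, rfl⟩)))
    rw [sum_swap_general χ f l u E hsub hall]
    congr 1
    have hm1 : s(l,p) ∉ ({s(u,p), s(u,v), s(u,w)} : Finset (Sym2 V)) := by
      simp [Sym2.eq_iff, hlu, hlp, hlv, hlw, hpu, hpv, hpw]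
    have hm2 : s(u,p) ∉ ({s(u,v), s(u,w)} : Finset (Sym2 V)) := by
      simp [Sym2.eq_iff, hup'', hpu, hpv, hpw, hvu, hwu]
    have hm3 : s(u,v) ∉ ({s(u,w)} : Finset (Sym2 V)) := by
      simp [Sym2.eq_iff, hvw, hwu, hvu]
    rw [hE]
    simp only [Finset.sum_insert hm1, Finset.sum_insert hm2, Finset.sum_insert hm3,
      Finset.sum_singleton]
    simp only [Sym2.map_pair_eq, Function.comp_apply, Equiv.swap_apply_left,
      Equiv.swap_apply_right, Equiv.swap_apply_of_ne_of_ne hvl hvu,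
      Equiv.swap_apply_of_ne_of_ne hwl hwu, Equiv.swap_apply_of_ne_of_ne hpl' hpu]
    ring

lemma cover (s δ γ : ZMod 3) (hδ : δ ≠ 0) (hγ : γ ≠ 0) :
    s = 0 ∨ s + δ = 0 ∨ s + γ = 0 ∨ s + δ + γ = 0 := by
  revert s δ γ; decide

open SimpleGraph in
lemma adj_v2 {v₁ v₂ v₃ v₄ : V} (hSS : IsSwitchingStructure F v₁ v₂ v₃ v₄)
    {z : V} (hz : F.Adj v₂ z) : z = v₁ ∨ z = v₃ := by
  obtain ⟨hnd, hcase⟩ := hSS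
  simp only [List.nodup_cons, List.mem_cons, List.not_mem_nil, or_false, not_or,
    List.nodup_nil, and_true] at hnd
  obtain ⟨⟨h12, h13, h14⟩, ⟨h23, h24⟩, h34, -⟩ := hnd
  rcases hcase with ⟨a12, a23, a34, d2, d3⟩ | ⟨a12, d2, a43, d3⟩
  · exact adj2 d2 a12.symm a23 h13 hz
  · exact Or.inl (adj1 d2 a12.symm hz)

open SimpleGraph in
lemma adj_v3 {v₁ v₂ v₃ v₄ : V} (hSS : IsSwitchingStructure F v₁ v₂ v₃ v₄)
    {z : V} (hz : F.Adj v₃ z) : z = v₂ ∨ z = v₄ := by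
  obtain ⟨hnd, hcase⟩ := hSS
  simp only [List.nodup_cons, List.mem_cons, List.not_mem_nil, or_false, not_or,
    List.nodup_nil, and_true] at hnd
  obtain ⟨⟨h12, h13, h14⟩, ⟨h23, h24⟩, h34, -⟩ := hnd
  rcases hcase with ⟨a12, a23, a34, d2, d3⟩ | ⟨a12, d2, a43, d3⟩
  · exact adj2 d3 a23.symm a34 h24 hz
  · exact Or.inr (adj1 d3 a43.symm hz)

lemma assemble {n : ℕ} (χ : Sym2 (Fin n) → ZMod 3) {v₂ v₃ l u : V}
    (f : V → Fin n) (hfinj : Function.Injective f) (δ γ : ZMod 3)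
    (h2 : ∑ e ∈ F.edgeFinset, χ (e.map (f ∘ Equiv.swap v₂ v₃)) =
      ∑ e ∈ F.edgeFinset, χ (e.map f) + δ)
    (h3 : ∑ e ∈ F.edgeFinset, χ (e.map (f ∘ Equiv.swap l u)) =
      ∑ e ∈ F.edgeFinset, χ (e.map f) + γ)
    (h4 : ∑ e ∈ F.edgeFinset, χ (e.map ((f ∘ Equiv.swap v₂ v₃) ∘ Equiv.swap l u)) =
      ∑ e ∈ F.edgeFinset, χ (e.map f) + δ + γ)
    (hδ : δ ≠ 0) (hγ : γ ≠ 0) : HasZeroSumCopy F χ := by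
  rcases cover (∑ e ∈ F.edgeFinset, χ (e.map f)) δ γ hδ hγ with h|h|h|h
  · exact ⟨f, hfinj, h⟩
  · exact ⟨f ∘ Equiv.swap v₂ v₃, hfinj.comp (Equiv.injective _), by rw [h2]; exact h⟩
  · exact ⟨f ∘ Equiv.swap l u, hfinj.comp (Equiv.injective _), by rw [h3]; exact h⟩
  · exact ⟨(f ∘ Equiv.swap v₂ v₃) ∘ Equiv.swap l u,
      (hfinj.comp (Equiv.injective _)).comp (Equiv.injective _), by rw [h4]; exact h⟩

lemma exists_inj_extend {n : ℕ} (hcard : Fintype.card V ≤ n) :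
    ∀ (L : List V) (M : List (Fin n)), L.Nodup → M.Nodup → L.length = M.length →
      ∃ f : V → Fin n, Function.Injective f ∧ ∀ pr ∈ L.zip M, f pr.1 = pr.2 := by
  intro L
  induction L with
  | nil =>
    intro M _ _ _
    obtain ⟨f⟩ := Function.Embedding.nonempty_of_card_le (α := V) (β := Fin n) (by rwa [Fintype.card_fin])
    exact ⟨f, f.injective, by simp⟩
  | cons a L ih =>
    intro M hL hM hlen
    cases M with
    | nil => simp at hlen
    | cons m M' =>
      obtain ⟨f, hfinj, hf⟩ := ih M' (List.nodup_cons.1 hL).2 (List.nodup_cons.1 hM).2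
        (by simpa using hlen)
      refine ⟨(Equiv.swap (f a) m) ∘ f, (Equiv.injective _).comp hfinj, ?_⟩
      intro pr hpr
      rw [List.zip_cons_cons] at hpr
      rcases List.mem_cons.1 hpr with rfl | hpr'
      · simp [Equiv.swap_apply_left]
      · have h1 : f pr.1 = pr.2 := hf pr hpr'
        have hm1 : pr.1 ∈ L := (List.of_mem_zip hpr').1
        have hm2 : pr.2 ∈ M' := (List.of_mem_zip hpr').2
        have hne1 : f pr.1 ≠ f a := fun h => (List.nodup_cons.1 hL).1 (hfinj h ▸ hm1)
        have hne2 : f pr.1 ≠ m := by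
          rw [h1]; exact fun h => (List.nodup_cons.1 hM).1 (h ▸ hm2)
        rw [Function.comp_apply, Equiv.swap_apply_of_ne_of_ne hne1 hne2]
        exact h1

lemma extractA {n : ℕ} {χ : Sym2 (Fin n) → ZMod 3} {a b c d : Fin n}
    (hn : 7 ≤ n) (hM : ¬ MonoOutside χ a b c d) :
    ∃ p x y : Fin n,
      p ≠ a ∧ p ≠ b ∧ p ≠ c ∧ p ≠ d ∧ x ≠ a ∧ x ≠ b ∧ x ≠ c ∧ x ≠ d ∧
      y ≠ a ∧ y ≠ b ∧ y ≠ c ∧ y ≠ d ∧ p ≠ x ∧ p ≠ y ∧ x ≠ y ∧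
      χ s(p, x) ≠ χ s(p, y) := by
  by_contra hcon
  push_neg at hcon
  have hT4 : ({a, b, c, d} : Finset (Fin n)).card ≤ 4 := by
    apply le_trans (Finset.card_insert_le _ _)
    apply Nat.succ_le_succ
    apply le_trans (Finset.card_insert_le _ _)
    apply Nat.succ_le_succ
    apply le_trans (Finset.card_insert_le _ _)
    simp
  have hcc : 1 < (({a, b, c, d} : Finset (Fin n))ᶜ).card := by
    rw [Finset.card_compl, Fintype.card_fin]
    omega
  obtain ⟨o₁, o₂, ho₁, ho₂, ho12⟩ := Finset.one_lt_card_iff.1 hcc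
  simp only [Finset.mem_compl, Finset.mem_insert, Finset.mem_singleton, not_or] at ho₁ ho₂
  obtain ⟨h1a, h1b, h1c, h1d⟩ := ho₁
  obtain ⟨h2a, h2b, h2c, h2d⟩ := ho₂
  apply hM
  refine ⟨χ s(o₁, o₂), ?_⟩
  intro x y hxa hxb hxc hxd hya hyb hyc hyd hxy
  by_cases hx1 : x = o₁
  · subst hx1
    by_cases hy2 : y = o₂
    · subst hy2; rfl
    · exact hcon x y o₂ hxa hxb hxc hxd hya hyb hyc hyd h2a h2b h2c h2d hxy
        (fun h => ho12 h) hy2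
  · by_cases hy1 : y = o₁
    · subst hy1
      rw [show (s(x, y) : Sym2 (Fin n)) = s(y, x) from Sym2.eq_swap]
      by_cases hx2 : x = o₂
      · subst hx2; rfl
      · exact hcon y x o₂ hya hyb hyc hyd hxa hxb hxc hxd h2a h2b h2c h2d
          (fun h => hxy h.symm) ho12 hx2
    · have step1 : χ s(x, y) = χ s(x, o₁) :=
        hcon x y o₁ hxa hxb hxc hxd hya hyb hyc hyd h1a h1b h1c h1d hxy hx1 hy1
      have step2 : χ s(o₁, x) = χ s(o₁, o₂) := by
        by_cases hx2 : x = o₂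
        · subst hx2; rfl
        · exact hcon o₁ x o₂ h1a h1b h1c h1d hxa hxb hxc hxd h2a h2b h2c h2d
            (fun h => hx1 h.symm) ho12 hx2
      rw [step1, show (s(x, o₁) : Sym2 (Fin n)) = s(o₁, x) from Sym2.eq_swap, step2]

lemma extractB {n : ℕ} {χ : Sym2 (Fin n) → ZMod 3} {a b c d : Fin n}
    (hn : 9 ≤ n) (hM : ¬ MonoOutside χ a b c d) :
    ∃ x y z t : Fin n,
      x ≠ a ∧ x ≠ b ∧ x ≠ c ∧ x ≠ d ∧ y ≠ a ∧ y ≠ b ∧ y ≠ c ∧ y ≠ d ∧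
      z ≠ a ∧ z ≠ b ∧ z ≠ c ∧ z ≠ d ∧ t ≠ a ∧ t ≠ b ∧ t ≠ c ∧ t ≠ d ∧
      x ≠ y ∧ x ≠ z ∧ x ≠ t ∧ y ≠ z ∧ y ≠ t ∧ z ≠ t ∧
      χ s(x, z) + χ s(x, t) ≠ χ s(y, z) + χ s(y, t) := by
  obtain ⟨p, x, y, hpa, hpb, hpc, hpd, hxa, hxb, hxc, hxd, hya, hyb, hyc, hyd,
    hpx, hpy, hxy, hneq⟩ := extractA (by omega) hM
  by_contra hcon
  push_neg at hcon
  have hT7 : ({a, b, c, d, p, x, y} : Finset (Fin n)).card ≤ 7 := by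
    apply le_trans (Finset.card_insert_le _ _)
    apply Nat.succ_le_succ
    apply le_trans (Finset.card_insert_le _ _)
    apply Nat.succ_le_succ
    apply le_trans (Finset.card_insert_le _ _)
    apply Nat.succ_le_succ
    apply le_trans (Finset.card_insert_le _ _)
    apply Nat.succ_le_succ
    apply le_trans (Finset.card_insert_le _ _)
    apply Nat.succ_le_succ
    apply le_trans (Finset.card_insert_le _ _)
    simp
  have hcc : 1 < (({a, b, c, d, p, x, y} : Finset (Fin n))ᶜ).card := by
    rw [Finset.card_compl, Fintype.card_fin]
    omega
  obtain ⟨t₁, t₂, ht₁, ht₂, ht12⟩ := Finset.one_lt_card_iff.1 hcc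
  simp only [Finset.mem_compl, Finset.mem_insert, Finset.mem_singleton, not_or] at ht₁ ht₂
  obtain ⟨h1a, h1b, h1c, h1d, h1p, h1x, h1y⟩ := ht₁
  obtain ⟨h2a, h2b, h2c, h2d, h2p, h2x, h2y⟩ := ht₂
  have e1 := hcon x y p t₁ hxa hxb hxc hxd hya hyb hyc hyd hpa hpb hpc hpd
    h1a h1b h1c h1d hxy (fun h => hpx h.symm) (fun h => h1x h.symm)
    (fun h => hpy h.symm) (fun h => h1y h.symm) (fun h => h1p h.symm)
  have e2 := hcon x y p t₂ hxa hxb hxc hxd hya hyb hyc hyd hpa hpb hpc hpd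
    h2a h2b h2c h2d hxy (fun h => hpx h.symm) (fun h => h2x h.symm)
    (fun h => hpy h.symm) (fun h => h2y h.symm) (fun h => h2p h.symm)
  have e3 := hcon x y t₁ t₂ hxa hxb hxc hxd hya hyb hyc hyd
    h1a h1b h1c h1d h2a h2b h2c h2d hxy (fun h => h1x h.symm) (fun h => h2x h.symm)
    (fun h => h1y h.symm) (fun h => h2y h.symm) ht12
  apply hneq
  rw [show (s(p, x) : Sym2 (Fin n)) = s(x, p) from Sym2.eq_swap,
    show (s(p, y) : Sym2 (Fin n)) = s(y, p) from Sym2.eq_swap]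
  have key : ∀ A B : ZMod 3, A + A = B + B → A = B := by decide
  apply key
  linear_combination e1 + e2 - e3

end ZSAux

open ZSAux

set_option maxHeartbeats 1000000 in
theorem stmt15 {V : Type} [Fintype V] [DecidableEq V]
    (F : SimpleGraph V) [DecidableRel F.Adj] (n : ℕ)
    (hcard : Fintype.card V = n)
    (hforest : F.IsAcyclic)
    (hdiv : 3 ∣ F.edgeFinset.card)
    (hstruct : ∃ v₁ v₂ v₃ v₄ : V, IsSwitchingStructure F v₁ v₂ v₃ v₄ ∧
      ((7 ≤ n ∧ ∃ l u : V, IsGenSwitch2 F l u ∧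
          l ≠ v₁ ∧ l ≠ v₂ ∧ l ≠ v₃ ∧ l ≠ v₄ ∧
          u ≠ v₁ ∧ u ≠ v₂ ∧ u ≠ v₃ ∧ u ≠ v₄) ∨
        (9 ≤ n ∧ ∃ l u v w : V, IsGenSwitch3 F l u v w ∧
          ∀ x ∈ ([l, u, v, w] : List V), ∀ y ∈ ([v₁, v₂, v₃, v₄] : List V), x ≠ y)))
    (χ : Sym2 (Fin n) → ZMod 3)
    (hC : ∃ a b c d : Fin n, IsAltC4 χ a b c d ∧ ¬ MonoOutside χ a b c d) :
    HasZeroSumCopy F χ := by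
  obtain ⟨v₁, v₂, v₃, v₄, hSS, hrest⟩ := hstruct
  obtain ⟨a, b, c, d, ⟨hndC, halt⟩, hMono⟩ := hC
  simp only [List.nodup_cons, List.mem_cons, List.not_mem_nil, or_false, not_or,
    List.nodup_nil, and_true, not_false_eq_true] at hndC
  obtain ⟨⟨hab, hac, had⟩, ⟨hbc, hbd⟩, hcd⟩ := hndC
  have hndS := hSS.1
  simp only [List.nodup_cons, List.mem_cons, List.not_mem_nil, or_false, not_or,
    List.nodup_nil, and_true, not_false_eq_true] at hndS
  obtain ⟨⟨h12, h13, h14⟩, ⟨h23, h24⟩, h34⟩ := hndS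
  have hcard' : Fintype.card V ≤ n := hcard.le
  rcases hrest with ⟨hn7, l, u, hGS2, hl1, hl2, hl3, hl4, hu1, hu2, hu3, hu4⟩ |
    ⟨hn9, l, u, v, w, hGS3, hdisj⟩
  · -- degree-2 generalized switching structure
    obtain ⟨t, hut, htl, hsum2⟩ := lu2 (n := n) χ hGS2
    have hlu : l ≠ u := hGS2.1
    have htu : t ≠ u := hut.ne'
    have ht2 : t ≠ v₂ := by
      rintro rfl
      rcases adj_v2 hSS hut.symm with rfl | rfl
      exacts [hu1 rfl, hu3 rfl]
    have ht3 : t ≠ v₃ := by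
      rintro rfl
      rcases adj_v3 hSS hut.symm with rfl | rfl
      exacts [hu2 rfl, hu4 rfl]
    obtain ⟨p, x, y, hpa, hpb, hpc, hpd, hxa, hxb, hxc, hxd, hya, hyb, hyc, hyd,
      hpx, hpy, hxy, hneq⟩ := extractA hn7 hMono
    have hγ : χ s(x, p) - χ s(y, p) ≠ 0 := by
      intro h0
      apply hneq
      rw [show (s(p, x) : Sym2 (Fin n)) = s(x, p) from Sym2.eq_swap,
        show (s(p, y) : Sym2 (Fin n)) = s(y, p) from Sym2.eq_swap]
      linear_combination h0
    have hout : ∀ z : Fin n, (z = a ∨ z = b ∨ z = c ∨ z = d) →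
        p ≠ z ∧ x ≠ z ∧ y ≠ z := by
      rintro z (rfl | rfl | rfl | rfl) <;>
        exact ⟨by assumption, by assumption, by assumption⟩
    by_cases ht1 : t = v₁
    · -- t = v₁ : the other endpoint of u is v₁
      obtain rfl := ht1.symm
      have hδex : ∃ m₂ m₃ m₄ : Fin n,
          (m₂ = a ∨ m₂ = b ∨ m₂ = c ∨ m₂ = d) ∧ (m₃ = a ∨ m₃ = b ∨ m₃ = c ∨ m₃ = d) ∧
          (m₄ = a ∨ m₄ = b ∨ m₄ = c ∨ m₄ = d) ∧ m₂ ≠ m₃ ∧ m₂ ≠ m₄ ∧ m₃ ≠ m₄ ∧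
          χ s(p, m₃) + χ s(m₂, m₄) - χ s(p, m₂) - χ s(m₃, m₄) ≠ 0 := by
        by_cases h0 : χ s(p, c) + χ s(a, b) - χ s(p, a) - χ s(c, b) = 0
        · refine ⟨c, a, d, Or.inr (Or.inr (Or.inl rfl)), Or.inl rfl,
            Or.inr (Or.inr (Or.inr rfl)), fun h => hac h.symm, hcd, had, ?_⟩
          intro h0'
          apply halt
          rw [show (s(b, c) : Sym2 (Fin n)) = s(c, b) from Sym2.eq_swap,
            show (s(d, a) : Sym2 (Fin n)) = s(a, d) from Sym2.eq_swap]
          linear_combination h0 + h0'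
        · exact ⟨a, c, b, Or.inl rfl, Or.inr (Or.inr (Or.inl rfl)),
            Or.inr (Or.inl rfl), hac, hab, fun h => hbc h.symm, h0⟩
      obtain ⟨m₂, m₃, m₄, hm2o, hm3o, hm4o, hm23, hm24, hm34, hδ⟩ := hδex
      obtain ⟨pm2, xm2, ym2⟩ := hout m₂ hm2o
      obtain ⟨pm3, xm3, ym3⟩ := hout m₃ hm3o
      obtain ⟨pm4, xm4, ym4⟩ := hout m₄ hm4o
      have hLnd : ([v₁, v₂, v₃, v₄, l, u] : List V).Nodup := by
        simp only [List.nodup_cons, List.mem_cons, List.not_mem_nil, or_false, not_or,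
          List.nodup_nil, and_true, not_false_eq_true]
        exact ⟨⟨h12, h13, h14, fun h => hl1 h.symm, fun h => hu1 h.symm⟩,
          ⟨h23, h24, fun h => hl2 h.symm, fun h => hu2 h.symm⟩,
          ⟨h34, fun h => hl3 h.symm, fun h => hu3 h.symm⟩,
          ⟨fun h => hl4 h.symm, fun h => hu4 h.symm⟩, hlu⟩
      have hMnd : ([p, m₂, m₃, m₄, x, y] : List (Fin n)).Nodup := by
        simp only [List.nodup_cons, List.mem_cons, List.not_mem_nil, or_false, not_or,
          List.nodup_nil, and_true, not_false_eq_true]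
        exact ⟨⟨pm2, pm3, pm4, hpx, hpy⟩,
          ⟨hm23, hm24, fun h => xm2 h.symm, fun h => ym2 h.symm⟩,
          ⟨hm34, fun h => xm3 h.symm, fun h => ym3 h.symm⟩,
          ⟨fun h => xm4 h.symm, fun h => ym4 h.symm⟩, hxy⟩
      obtain ⟨f, hfinj, hpins⟩ := exists_inj_extend hcard'
        [v₁, v₂, v₃, v₄, l, u] [p, m₂, m₃, m₄, x, y] hLnd hMnd rfl
      have hfv₁ : f v₁ = p := hpins (v₁, p) (by simp)
      have hfv₂ : f v₂ = m₂ := hpins (v₂, m₂) (by simp)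
      have hfv₃ : f v₃ = m₃ := hpins (v₃, m₃) (by simp)
      have hfv₄ : f v₄ = m₄ := hpins (v₄, m₄) (by simp)
      have hfl : f l = x := hpins (l, x) (by simp)
      have hfu : f u = y := hpins (u, y) (by simp)
      have h2 := vswap χ hSS f
      rw [hfv₁, hfv₂, hfv₃, hfv₄] at h2
      have h3 := hsum2 f
      rw [hfl, hfu, hfv₁] at h3
      have h4 := hsum2 (f ∘ Equiv.swap v₂ v₃)
      have cl : (f ∘ Equiv.swap v₂ v₃) l = f l := by
        simp [Equiv.swap_apply_of_ne_of_ne hl2 hl3]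
      have cu : (f ∘ Equiv.swap v₂ v₃) u = f u := by
        simp [Equiv.swap_apply_of_ne_of_ne hu2 hu3]
      have ct : (f ∘ Equiv.swap v₂ v₃) v₁ = f v₁ := by
        simp [Equiv.swap_apply_of_ne_of_ne h12 h13]
      rw [cl, cu, ct, hfl, hfu, hfv₁, h2] at h4
      exact assemble χ f hfinj _ _ h2 h3 h4 hδ hγ
    · by_cases ht4 : t = v₄
      · -- t = v₄
        obtain rfl := ht4.symm
        have hδex : ∃ m₁ m₂ m₃ : Fin n,
            (m₁ = a ∨ m₁ = b ∨ m₁ = c ∨ m₁ = d) ∧ (m₂ = a ∨ m₂ = b ∨ m₂ = c ∨ m₂ = d) ∧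
            (m₃ = a ∨ m₃ = b ∨ m₃ = c ∨ m₃ = d) ∧ m₁ ≠ m₂ ∧ m₁ ≠ m₃ ∧ m₂ ≠ m₃ ∧
            χ s(m₁, m₃) + χ s(m₂, p) - χ s(m₁, m₂) - χ s(m₃, p) ≠ 0 := by
          by_cases h0 : χ s(b, a) + χ s(c, p) - χ s(b, c) - χ s(a, p) = 0
          · refine ⟨d, a, c, Or.inr (Or.inr (Or.inr rfl)), Or.inl rfl,
              Or.inr (Or.inr (Or.inl rfl)), fun h => had h.symm, fun h => hcd h.symm, hac, ?_⟩
            intro h0'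
            apply halt
            rw [show (s(a, b) : Sym2 (Fin n)) = s(b, a) from Sym2.eq_swap,
              show (s(c, d) : Sym2 (Fin n)) = s(d, c) from Sym2.eq_swap]
            linear_combination h0 + h0'
          · exact ⟨b, c, a, Or.inr (Or.inl rfl), Or.inr (Or.inr (Or.inl rfl)),
              Or.inl rfl, hbc, fun h => hab h.symm, fun h => hac h.symm, h0⟩
        obtain ⟨m₁, m₂, m₃, hm1o, hm2o, hm3o, hm12, hm13, hm23, hδ⟩ := hδex
        obtain ⟨pm1, xm1, ym1⟩ := hout m₁ hm1o
        obtain ⟨pm2, xm2, ym2⟩ := hout m₂ hm2o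
        obtain ⟨pm3, xm3, ym3⟩ := hout m₃ hm3o
        have hLnd : ([v₁, v₂, v₃, v₄, l, u] : List V).Nodup := by
          simp only [List.nodup_cons, List.mem_cons, List.not_mem_nil, or_false, not_or,
            List.nodup_nil, and_true, not_false_eq_true]
          exact ⟨⟨h12, h13, h14, fun h => hl1 h.symm, fun h => hu1 h.symm⟩,
            ⟨h23, h24, fun h => hl2 h.symm, fun h => hu2 h.symm⟩,
            ⟨h34, fun h => hl3 h.symm, fun h => hu3 h.symm⟩,
            ⟨fun h => hl4 h.symm, fun h => hu4 h.symm⟩, hlu⟩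
        have hMnd : ([m₁, m₂, m₃, p, x, y] : List (Fin n)).Nodup := by
          simp only [List.nodup_cons, List.mem_cons, List.not_mem_nil, or_false, not_or,
            List.nodup_nil, and_true, not_false_eq_true]
          exact ⟨⟨hm12, hm13, fun h => pm1 h.symm, fun h => xm1 h.symm, fun h => ym1 h.symm⟩,
            ⟨hm23, fun h => pm2 h.symm, fun h => xm2 h.symm, fun h => ym2 h.symm⟩,
            ⟨fun h => pm3 h.symm, fun h => xm3 h.symm, fun h => ym3 h.symm⟩,
            ⟨hpx, hpy⟩, hxy⟩
        obtain ⟨f, hfinj, hpins⟩ := exists_inj_extend hcard'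
          [v₁, v₂, v₃, v₄, l, u] [m₁, m₂, m₃, p, x, y] hLnd hMnd rfl
        have hfv₁ : f v₁ = m₁ := hpins (v₁, m₁) (by simp)
        have hfv₂ : f v₂ = m₂ := hpins (v₂, m₂) (by simp)
        have hfv₃ : f v₃ = m₃ := hpins (v₃, m₃) (by simp)
        have hfv₄ : f v₄ = p := hpins (v₄, p) (by simp)
        have hfl : f l = x := hpins (l, x) (by simp)
        have hfu : f u = y := hpins (u, y) (by simp)
        have h2 := vswap χ hSS f
        rw [hfv₁, hfv₂, hfv₃, hfv₄] at h2
        have h3 := hsum2 f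
        rw [hfl, hfu, hfv₄] at h3
        have h4 := hsum2 (f ∘ Equiv.swap v₂ v₃)
        have cl : (f ∘ Equiv.swap v₂ v₃) l = f l := by
          simp [Equiv.swap_apply_of_ne_of_ne hl2 hl3]
        have cu : (f ∘ Equiv.swap v₂ v₃) u = f u := by
          simp [Equiv.swap_apply_of_ne_of_ne hu2 hu3]
        have ct : (f ∘ Equiv.swap v₂ v₃) v₄ = f v₄ := by
          simp [Equiv.swap_apply_of_ne_of_ne (fun h => h24 h.symm) (fun h => h34 h.symm)]
        rw [cl, cu, ct, hfl, hfu, hfv₄, h2] at h4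
        exact assemble χ f hfinj _ _ h2 h3 h4 hδ hγ
      · -- t is disjoint from v₁, v₂, v₃, v₄
        have hδ : χ s(a, d) + χ s(b, c) - χ s(a, b) - χ s(d, c) ≠ 0 := by
          intro h0
          apply halt
          rw [show (s(c, d) : Sym2 (Fin n)) = s(d, c) from Sym2.eq_swap,
            show (s(d, a) : Sym2 (Fin n)) = s(a, d) from Sym2.eq_swap]
          linear_combination -h0
        have hLnd : ([v₁, v₂, v₃, v₄, l, u, t] : List V).Nodup := by
          simp only [List.nodup_cons, List.mem_cons, List.not_mem_nil, or_false, not_or,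
            List.nodup_nil, and_true, not_false_eq_true]
          exact ⟨⟨h12, h13, h14, fun h => hl1 h.symm, fun h => hu1 h.symm,
              fun h => ht1 h.symm⟩,
            ⟨h23, h24, fun h => hl2 h.symm, fun h => hu2 h.symm, fun h => ht2 h.symm⟩,
            ⟨h34, fun h => hl3 h.symm, fun h => hu3 h.symm, fun h => ht3 h.symm⟩,
            ⟨fun h => hl4 h.symm, fun h => hu4 h.symm, fun h => ht4 h.symm⟩,
            ⟨hlu, fun h => htl h.symm⟩, fun h => htu h.symm⟩
        have hMnd : ([a, b, d, c, x, y, p] : List (Fin n)).Nodup := by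
          simp only [List.nodup_cons, List.mem_cons, List.not_mem_nil, or_false, not_or,
            List.nodup_nil, and_true, not_false_eq_true]
          exact ⟨⟨hab, had, hac, fun h => hxa h.symm, fun h => hya h.symm,
              fun h => hpa h.symm⟩,
            ⟨hbd, hbc, fun h => hxb h.symm, fun h => hyb h.symm, fun h => hpb h.symm⟩,
            ⟨fun h => hcd h.symm, fun h => hxd h.symm, fun h => hyd h.symm,
              fun h => hpd h.symm⟩,
            ⟨fun h => hxc h.symm, fun h => hyc h.symm, fun h => hpc h.symm⟩,
            ⟨hxy, fun h => hpx h.symm⟩, fun h => hpy h.symm⟩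
        obtain ⟨f, hfinj, hpins⟩ := exists_inj_extend hcard'
          [v₁, v₂, v₃, v₄, l, u, t] [a, b, d, c, x, y, p] hLnd hMnd rfl
        have hfv₁ : f v₁ = a := hpins (v₁, a) (by simp)
        have hfv₂ : f v₂ = b := hpins (v₂, b) (by simp)
        have hfv₃ : f v₃ = d := hpins (v₃, d) (by simp)
        have hfv₄ : f v₄ = c := hpins (v₄, c) (by simp)
        have hfl : f l = x := hpins (l, x) (by simp)
        have hfu : f u = y := hpins (u, y) (by simp)
        have hft : f t = p := hpins (t, p) (by simp)
        have h2 := vswap χ hSS f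
        rw [hfv₁, hfv₂, hfv₃, hfv₄] at h2
        have h3 := hsum2 f
        rw [hfl, hfu, hft] at h3
        have h4 := hsum2 (f ∘ Equiv.swap v₂ v₃)
        have cl : (f ∘ Equiv.swap v₂ v₃) l = f l := by
          simp [Equiv.swap_apply_of_ne_of_ne hl2 hl3]
        have cu : (f ∘ Equiv.swap v₂ v₃) u = f u := by
          simp [Equiv.swap_apply_of_ne_of_ne hu2 hu3]
        have ct : (f ∘ Equiv.swap v₂ v₃) t = f t := by
          simp [Equiv.swap_apply_of_ne_of_ne ht2 ht3]
        rw [cl, cu, ct, hfl, hfu, hft, h2] at h4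
        exact assemble χ f hfinj _ _ h2 h3 h4 hδ hγ
  · -- degree-3 generalized switching structure
    have hl1 : l ≠ v₁ := hdisj l (by simp) v₁ (by simp)
    have hl2 : l ≠ v₂ := hdisj l (by simp) v₂ (by simp)
    have hl3 : l ≠ v₃ := hdisj l (by simp) v₃ (by simp)
    have hl4 : l ≠ v₄ := hdisj l (by simp) v₄ (by simp)
    have hu1 : u ≠ v₁ := hdisj u (by simp) v₁ (by simp)
    have hu2 : u ≠ v₂ := hdisj u (by simp) v₂ (by simp)
    have hu3 : u ≠ v₃ := hdisj u (by simp) v₃ (by simp)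
    have hu4 : u ≠ v₄ := hdisj u (by simp) v₄ (by simp)
    have hv1 : v ≠ v₁ := hdisj v (by simp) v₁ (by simp)
    have hv2 : v ≠ v₂ := hdisj v (by simp) v₂ (by simp)
    have hv3 : v ≠ v₃ := hdisj v (by simp) v₃ (by simp)
    have hv4 : v ≠ v₄ := hdisj v (by simp) v₄ (by simp)
    have hw1 : w ≠ v₁ := hdisj w (by simp) v₁ (by simp)
    have hw2 : w ≠ v₂ := hdisj w (by simp) v₂ (by simp)
    have hw3 : w ≠ v₃ := hdisj w (by simp) v₃ (by simp)
    have hw4 : w ≠ v₄ := hdisj w (by simp) v₄ (by simp)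
    have hndG := hGS3.1
    simp only [List.nodup_cons, List.mem_cons, List.not_mem_nil, or_false, not_or,
      List.nodup_nil, and_true, not_false_eq_true] at hndG
    obtain ⟨⟨hlu, hlv, hlw⟩, ⟨huv, huw⟩, hvw⟩ := hndG
    obtain ⟨x, y, z, t, hxa, hxb, hxc, hxd, hya, hyb, hyc, hyd, hza, hzb, hzc, hzd,
      hta, htb, htc, htd, hxy, hxz, hxt, hyz, hyt, hzt, hneq⟩ := extractB hn9 hMono
    have hsum3 := lu3 (n := n) χ hGS3
    have hδ : χ s(a, d) + χ s(b, c) - χ s(a, b) - χ s(d, c) ≠ 0 := by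
      intro h0
      apply halt
      rw [show (s(c, d) : Sym2 (Fin n)) = s(d, c) from Sym2.eq_swap,
        show (s(d, a) : Sym2 (Fin n)) = s(a, d) from Sym2.eq_swap]
      linear_combination -h0
    have hγ : χ s(x, z) + χ s(x, t) - χ s(y, z) - χ s(y, t) ≠ 0 := by
      intro h0
      exact hneq (by linear_combination h0)
    have hLnd : ([v₁, v₂, v₃, v₄, l, u, v, w] : List V).Nodup := by
      simp only [List.nodup_cons, List.mem_cons, List.not_mem_nil, or_false, not_or,
        List.nodup_nil, and_true, not_false_eq_true]
      exact ⟨⟨h12, h13, h14, fun h => hl1 h.symm, fun h => hu1 h.symm,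
          fun h => hv1 h.symm, fun h => hw1 h.symm⟩,
        ⟨h23, h24, fun h => hl2 h.symm, fun h => hu2 h.symm, fun h => hv2 h.symm,
          fun h => hw2 h.symm⟩,
        ⟨h34, fun h => hl3 h.symm, fun h => hu3 h.symm, fun h => hv3 h.symm,
          fun h => hw3 h.symm⟩,
        ⟨fun h => hl4 h.symm, fun h => hu4 h.symm, fun h => hv4 h.symm,
          fun h => hw4 h.symm⟩,
        ⟨hlu, hlv, hlw⟩, ⟨huv, huw⟩, hvw⟩
    have hMnd : ([a, b, d, c, x, y, z, t] : List (Fin n)).Nodup := by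
      simp only [List.nodup_cons, List.mem_cons, List.not_mem_nil, or_false, not_or,
        List.nodup_nil, and_true, not_false_eq_true]
      exact ⟨⟨hab, had, hac, fun h => hxa h.symm, fun h => hya h.symm,
          fun h => hza h.symm, fun h => hta h.symm⟩,
        ⟨hbd, hbc, fun h => hxb h.symm, fun h => hyb h.symm, fun h => hzb h.symm,
          fun h => htb h.symm⟩,
        ⟨fun h => hcd h.symm, fun h => hxd h.symm, fun h => hyd h.symm,
          fun h => hzd h.symm, fun h => htd h.symm⟩,
        ⟨fun h => hxc h.symm, fun h => hyc h.symm, fun h => hzc h.symm,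
          fun h => htc h.symm⟩,
        ⟨hxy, hxz, hxt⟩, ⟨hyz, hyt⟩, hzt⟩
    obtain ⟨f, hfinj, hpins⟩ := exists_inj_extend hcard'
      [v₁, v₂, v₃, v₄, l, u, v, w] [a, b, d, c, x, y, z, t] hLnd hMnd rfl
    have hfv₁ : f v₁ = a := hpins (v₁, a) (by simp)
    have hfv₂ : f v₂ = b := hpins (v₂, b) (by simp)
    have hfv₃ : f v₃ = d := hpins (v₃, d) (by simp)
    have hfv₄ : f v₄ = c := hpins (v₄, c) (by simp)
    have hfl : f l = x := hpins (l, x) (by simp)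
    have hfu : f u = y := hpins (u, y) (by simp)
    have hfv : f v = z := hpins (v, z) (by simp)
    have hfw : f w = t := hpins (w, t) (by simp)
    have h2 := vswap χ hSS f
    rw [hfv₁, hfv₂, hfv₃, hfv₄] at h2
    have h3 := hsum3 f
    rw [hfl, hfu, hfv, hfw] at h3
    have h4 := hsum3 (f ∘ Equiv.swap v₂ v₃)
    have cl : (f ∘ Equiv.swap v₂ v₃) l = f l := by
      simp [Equiv.swap_apply_of_ne_of_ne hl2 hl3]
    have cu : (f ∘ Equiv.swap v₂ v₃) u = f u := by
      simp [Equiv.swap_apply_of_ne_of_ne hu2 hu3]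
    have cv : (f ∘ Equiv.swap v₂ v₃) v = f v := by
      simp [Equiv.swap_apply_of_ne_of_ne hv2 hv3]
    have cw : (f ∘ Equiv.swap v₂ v₃) w = f w := by
      simp [Equiv.swap_apply_of_ne_of_ne hw2 hw3]
    rw [cl, cu, cv, cw, hfl, hfu, hfv, hfw, h2] at h4
    exact assemble χ f hfinj _ _ h2 h3 h4 hδ hγ
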